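/- arXiv:2310.18736 — 2 statements merged into one kernel-verified Lean document; each statement's English description precedes it below -/
import Mathlib

section
/- In any execution of the men-proposing deferred acceptance algorithm on a profile with n men and n women (complete strict preferences), there exists at least one woman who receives exactly one proposal in total. -/
open scoped Classical

noncomputable section

/-- A two-sided matching market with `n` men and `n` women, each with a complete
strict preference order over the other side. `mpref m k` is man `m`'s `k`-th
favourite woman (0 = top), and `wpref w k` is woman `w`'s `k`-th favourite man. -/
structure Profile (n : ℕ) where
  mpref : Fin n → (Fin n ≃ Fin n)
  wpref : Fin n → (Fin n ≃ Fin n)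

namespace Profile

variable {n : ℕ}

/-- rank (0 = best) of woman `w` in man `m`'s preference list -/
def mrank (P : Profile n) (m w : Fin n) : ℕ := ((P.mpref m).symm w : ℕ)

/-- rank (0 = best) of man `m` in woman `w`'s preference list -/
def wrank (P : Profile n) (w m : Fin n) : ℕ := ((P.wpref w).symm m : ℕ)

/-- man `m` strictly prefers woman `w` to woman `w'` -/
def mPrefers (P : Profile n) (m w w' : Fin n) : Prop := P.mrank m w < P.mrank m w'

/-- woman `w` strictly prefers man `m` to man `m'` -/
def wPrefers (P : Profile n) (w m m' : Fin n) : Prop := P.wrank w m < P.wrank w m'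

/-- top choice of man `m` -/
def topM (P : Profile n) (m : Fin n) : Fin n := P.mpref m ⟨0, m.pos⟩

/-- top choice of woman `w` -/
def topW (P : Profile n) (w : Fin n) : Fin n := P.wpref w ⟨0, w.pos⟩

/-- the profile with the roles of men and women exchanged -/
def swap (P : Profile n) : Profile n := ⟨P.wpref, P.mpref⟩

/-- State of the men-proposing deferred acceptance algorithm:
`next m` = number of proposals man `m` has made so far,
`held w` = the man woman `w` currently tentatively holds (if any). -/
structure DAState (n : ℕ) where
  next : Fin n → ℕ
  held : Fin n → Option (Fin n)

def initState (n : ℕ) : DAState n := ⟨fun _ => 0, fun _ => none⟩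

/-- the men currently unmatched (held by no woman) -/
def unmatched (s : DAState n) : Finset (Fin n) :=
  Finset.univ.filter fun m => ∀ w : Fin n, s.held w ≠ some m

/-- the woman man `m` proposes to next: his most preferred woman among those
who have not rejected him yet -/
def target (P : Profile n) (s : DAState n) (m : Fin n) : Fin n :=
  P.mpref m ⟨s.next m % n, Nat.mod_lt _ m.pos⟩

/-- the men proposing to woman `w` in the current round -/
def proposers (P : Profile n) (s : DAState n) (w : Fin n) : Finset (Fin n) :=
  (unmatched s).filter fun m => target P s m = w

/-- one round of the men-proposing deferred acceptance algorithm: every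
unmatched man proposes to his favourite woman who has not rejected him yet,
and every woman tentatively holds her favourite among her current partner
and the new proposers, rejecting the rest -/
def step (P : Profile n) (s : DAState n) : DAState n where
  next := fun m => if m ∈ unmatched s then s.next m + 1 else s.next m
  held := fun w => ((proposers P s w ∪ (s.held w).toFinset).toList).argmin (P.wrank w)

/-- the state after `k` rounds of men-proposing deferred acceptance -/
def stateAt (P : Profile n) (k : ℕ) : DAState n := (step P)^[k] (initState n)

/-- the final state of men-proposing deferred acceptance
(`n * n + 1` iterations is always enough to reach the fixed point) -/
def finalState (P : Profile n) : DAState n := stateAt P (n * n + 1)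

/-- total number of proposals made during the men-proposing DA -/
def totalProposals (P : Profile n) : ℕ := ∑ m : Fin n, (finalState P).next m

/-- number of rounds of the men-proposing DA (rounds in which some proposal is made) -/
def rounds (P : Profile n) : ℕ :=
  ((Finset.range (n * n + 1)).filter fun k => (unmatched (stateAt P k)).Nonempty).card

/-- total number of proposals received by woman `w` during the men-proposing DA -/
def proposalsTo (P : Profile n) (w : Fin n) : ℕ :=
  ∑ k ∈ Finset.range (n * n + 1), (proposers P (stateAt P k) w).card

/-- man `m` proposes to woman `w` at some point during the men-proposing DA -/
def proposedTo (P : Profile n) (m w : Fin n) : Prop :=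
  ∃ k < n * n + 1, m ∈ proposers P (stateAt P k) w

/-- the men-proposing DA makes the maximum possible number `n² - n + 1` of proposals -/
def MaxProp (P : Profile n) : Prop := P.totalProposals = n * n + 1 - n

/-- the men-proposing DA takes the maximum possible number `n² - 2n + 2` of rounds -/
def MaxRou (P : Profile n) : Prop := P.rounds = n * n + 2 - 2 * n

/-- a matching (a bijection man ↦ woman) is stable iff no man-woman pair mutually
prefer each other to their assigned partners -/
def Stable (P : Profile n) (μ : Fin n ≃ Fin n) : Prop :=
  ¬ ∃ (m w : Fin n), P.mPrefers m w (μ m) ∧ P.wPrefers w m (μ.symm w)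

/-- the profile admits a unique stable matching -/
def USM (P : Profile n) : Prop := ∃! μ : Fin n ≃ Fin n, P.Stable μ

/-- the sequential preference condition of Eeckhout (2000) -/
def SPC (P : Profile n) : Prop :=
  ∃ σ τ : Equiv.Perm (Fin n), ∀ i j : Fin n, i < j →
    P.mPrefers (σ i) (τ i) (τ j) ∧ P.wPrefers (τ i) (σ i) (σ j)

/-- the no crossing condition of Clark (2006) -/
def NCC (P : Profile n) : Prop :=
  ∃ σ τ : Equiv.Perm (Fin n), ∀ i j k l : Fin n, i < j → k < l →
    (P.mPrefers (σ i) (τ l) (τ k) → P.mPrefers (σ j) (τ l) (τ k)) ∧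
    (P.wPrefers (τ k) (σ j) (σ i) → P.wPrefers (τ l) (σ j) (σ i))

end Profile

namespace Profile

variable {n : ℕ}

lemma wrank_inj (P : Profile n) (w : Fin n) {m m' : Fin n}
    (h : P.wrank w m = P.wrank w m') : m = m' :=
  (P.wpref w).symm.injective (Fin.val_injective h)

lemma mem_unmatched {s : DAState n} {m : Fin n} :
    m ∈ unmatched s ↔ ∀ w, s.held w ≠ some m := by
  simp [unmatched]

lemma mem_proposers {P : Profile n} {s : DAState n} {w m : Fin n} :
    m ∈ proposers P s w ↔ m ∈ unmatched s ∧ target P s m = w := by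
  simp only [proposers, Finset.mem_filter]

lemma held_step_mem {P : Profile n} {s : DAState n} {w m : Fin n}
    (h : (step P s).held w = some m) :
    m ∈ proposers P s w ∪ (s.held w).toFinset := by
  have h' : ((proposers P s w ∪ (s.held w).toFinset).toList).argmin (P.wrank w) = some m := h
  exact Finset.mem_toList.mp (List.argmin_mem (Option.mem_def.mpr h'))

lemma held_step_min {P : Profile n} {s : DAState n} {w m x : Fin n}
    (h : (step P s).held w = some m)
    (hx : x ∈ proposers P s w ∪ (s.held w).toFinset) :
    P.wrank w m ≤ P.wrank w x := by
  have h' : ((proposers P s w ∪ (s.held w).toFinset).toList).argmin (P.wrank w) = some m := h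
  exact List.le_of_mem_argmin (Finset.mem_toList.mpr hx) (Option.mem_def.mpr h')

lemma held_step_isSome {P : Profile n} {s : DAState n} {w : Fin n}
    (h : (proposers P s w ∪ (s.held w).toFinset).Nonempty) :
    ∃ m, (step P s).held w = some m := by
  cases ho : (step P s).held w with
  | some m => exact ⟨m, rfl⟩
  | none =>
    exfalso
    have h0 : ((proposers P s w ∪ (s.held w).toFinset).toList).argmin (P.wrank w) = none := ho
    rw [List.argmin_eq_none, Finset.toList_eq_nil] at h0
    rw [h0] at h
    exact Finset.not_nonempty_empty h

lemma held_mono {P : Profile n} {s : DAState n} {w m : Fin n}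
    (h : s.held w = some m) :
    ∃ m', (step P s).held w = some m' ∧ P.wrank w m' ≤ P.wrank w m := by
  have hmem : m ∈ proposers P s w ∪ (s.held w).toFinset := by
    apply Finset.mem_union_right; simp [h]
  obtain ⟨m', h'⟩ := held_step_isSome ⟨m, hmem⟩
  exact ⟨m', h', held_step_min h' hmem⟩

lemma target_eq {P : Profile n} {s : DAState n} {m : Fin n} (h : s.next m < n) :
    target P s m = P.mpref m ⟨s.next m, h⟩ := by
  unfold target
  exact congrArg _ (Fin.ext (Nat.mod_eq_of_lt h))

lemma step_next {P : Profile n} (s : DAState n) (m : Fin n) :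
    (step P s).next m = if m ∈ unmatched s then s.next m + 1 else s.next m := rfl

/-- woman ranked `i` by `m` currently holds a man she strictly prefers to `m` -/
abbrev Rej (P : Profile n) (s : DAState n) (m : Fin n) (i : ℕ) (hi : i < n) : Prop :=
  ∃ m', s.held (P.mpref m ⟨i, hi⟩) = some m' ∧
    P.wrank (P.mpref m ⟨i, hi⟩) m' < P.wrank (P.mpref m ⟨i, hi⟩) m

/-- the main invariant of the DA algorithm -/
def Inv (P : Profile n) (s : DAState n) : Prop :=
  (∀ w w' m : Fin n, s.held w = some m → s.held w' = some m → w = w') ∧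
  (∀ m ∈ unmatched s, s.next m < n ∧ ∀ i, ∀ hi : i < n, i < s.next m → Rej P s m i hi) ∧
  (∀ w m : Fin n, s.held w = some m → 0 < s.next m ∧ s.next m ≤ n ∧
    P.mrank m w = s.next m - 1 ∧ ∀ i, ∀ hi : i < n, i < s.next m - 1 → Rej P s m i hi)

lemma no_all_rej {P : Profile n} {s : DAState n} {m : Fin n}
    (hinj : ∀ w w' m : Fin n, s.held w = some m → s.held w' = some m → w = w')
    (hall : ∀ i, ∀ hi : i < n, Rej P s m i hi) : False := by
  have hw : ∀ w : Fin n, ∃ m', s.held w = some m' ∧ P.wrank w m' < P.wrank w m := by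
    intro w
    obtain ⟨m', h1, h2⟩ := hall ((P.mpref m).symm w : ℕ) ((P.mpref m).symm w).isLt
    simp only [Fin.eta, Equiv.apply_symm_apply] at h1 h2
    exact ⟨m', h1, h2⟩
  choose g hg1 hg2 using hw
  have hginj : Function.Injective g := fun w w' h =>
    hinj w w' (g w) (hg1 w) (h ▸ hg1 w')
  obtain ⟨w, hwm⟩ := Finite.surjective_of_injective hginj m
  exact absurd (hwm ▸ hg2 w) (lt_irrefl _)

lemma inv_step {P : Profile n} {s : DAState n} (hInv : Inv P s) : Inv P (step P s) := by
  obtain ⟨hinj, hU, hH⟩ := hInv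
  have hinj' : ∀ w w' m : Fin n, (step P s).held w = some m → (step P s).held w' = some m →
      w = w' := by
    intro w w' m h h'
    have h1 := held_step_mem h
    have h2 := held_step_mem h'
    rw [Finset.mem_union] at h1 h2
    rcases h1 with h1 | h1 <;> rcases h2 with h2 | h2
    · rw [mem_proposers] at h1 h2; rw [← h1.2, ← h2.2]
    · exact absurd (by simpa using h2) (mem_unmatched.mp (mem_proposers.mp h1).1 w')
    · exact absurd (by simpa using h1) (mem_unmatched.mp (mem_proposers.mp h2).1 w)
    · exact hinj w w' m (by simpa using h1) (by simpa using h2)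
  have hRejMono : ∀ m i, ∀ hi : i < n, Rej P s m i hi → Rej P (step P s) m i hi := by
    rintro m i hi ⟨m', h1, h2⟩
    obtain ⟨m'', h3, h4⟩ := held_mono h1
    exact ⟨m'', h3, lt_of_le_of_lt h4 h2⟩
  have hU' : ∀ m ∈ unmatched (step P s), (step P s).next m < n ∧
      ∀ i, ∀ hi : i < n, i < (step P s).next m → Rej P (step P s) m i hi := by
    intro m hm
    have hm' : ∀ w, (step P s).held w ≠ some m := mem_unmatched.mp hm
    by_cases hcase : m ∈ unmatched s
    · have hnext : (step P s).next m = s.next m + 1 := by rw [step_next, if_pos hcase]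
      obtain ⟨hlt, hrej⟩ := hU m hcase
      have hRejAll : ∀ i, ∀ hi : i < n, i < s.next m + 1 → Rej P (step P s) m i hi := by
        intro i hi hlt'
        rcases Nat.lt_succ_iff_lt_or_eq.mp hlt' with h | h
        · exact hRejMono m i hi (hrej i hi h)
        · subst h
          have htar : m ∈ proposers P s (P.mpref m ⟨s.next m, hi⟩) := by
            rw [mem_proposers]
            exact ⟨hcase, target_eq hi⟩
          have hmem := Finset.mem_union_left ((s.held (P.mpref m ⟨s.next m, hi⟩)).toFinset) htar
          obtain ⟨x, hx⟩ := held_step_isSome ⟨m, hmem⟩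
          have hle := held_step_min hx hmem
          have hne : x ≠ m := fun h => hm' _ (h ▸ hx)
          exact ⟨x, hx, lt_of_le_of_ne hle fun h => hne (wrank_inj P _ h)⟩
      refine ⟨?_, by rw [hnext]; exact hRejAll⟩
      rw [hnext]
      rcases Nat.lt_or_ge (s.next m + 1) n with h | h
      · exact h
      · exact absurd (no_all_rej hinj' (fun i hi => hRejAll i hi (by omega))) not_false
    · have hnext : (step P s).next m = s.next m := by rw [step_next, if_neg hcase]
      obtain ⟨w, hw⟩ : ∃ w, s.held w = some m := by
        by_contra h; push_neg at h; exact hcase (mem_unmatched.mpr h)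
      obtain ⟨hpos, hle, hrank, hrej⟩ := hH w m hw
      have hRejAll : ∀ i, ∀ hi : i < n, i < s.next m → Rej P (step P s) m i hi := by
        intro i hi hlt'
        rcases Nat.lt_or_ge i (s.next m - 1) with h | h
        · exact hRejMono m i hi (hrej i hi h)
        · have hieq : i = s.next m - 1 := by omega
          subst hieq
          have hww : P.mpref m ⟨s.next m - 1, hi⟩ = w := by
            have h1 : ((P.mpref m).symm w) = ⟨s.next m - 1, hi⟩ := Fin.ext hrank
            rw [← h1, Equiv.apply_symm_apply]
          simp only [Rej]
          rw [hww]
          have hmem : m ∈ proposers P s w ∪ (s.held w).toFinset := by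
            apply Finset.mem_union_right; simp [hw]
          obtain ⟨x, hx⟩ := held_step_isSome ⟨m, hmem⟩
          have hle' := held_step_min hx hmem
          have hne : x ≠ m := fun h => hm' _ (h ▸ hx)
          exact ⟨x, hx, lt_of_le_of_ne hle' fun h => hne (wrank_inj P _ h)⟩
      refine ⟨?_, by rw [hnext]; exact hRejAll⟩
      rw [hnext]
      rcases Nat.lt_or_ge (s.next m) n with h | h
      · exact h
      · exact absurd (no_all_rej hinj' (fun i hi => hRejAll i hi (by omega))) not_false
  have hH' : ∀ w m : Fin n, (step P s).held w = some m → 0 < (step P s).next m ∧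
      (step P s).next m ≤ n ∧ P.mrank m w = (step P s).next m - 1 ∧
      ∀ i, ∀ hi : i < n, i < (step P s).next m - 1 → Rej P (step P s) m i hi := by
    intro w m h
    have h1 := held_step_mem h
    rw [Finset.mem_union] at h1
    rcases h1 with h1 | h1
    · rw [mem_proposers] at h1
      obtain ⟨hum, htar⟩ := h1
      have hnext : (step P s).next m = s.next m + 1 := by rw [step_next, if_pos hum]
      obtain ⟨hlt, hrej⟩ := hU m hum
      have hwt : w = P.mpref m ⟨s.next m, hlt⟩ := by rw [← htar, target_eq hlt]
      have hmr : P.mrank m w = s.next m := by rw [hwt]; simp [mrank]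
      refine ⟨by omega, by omega, by omega, ?_⟩
      intro i hi hlt'
      rw [hnext] at hlt'
      exact hRejMono m i hi (hrej i hi (by omega))
    · have hw : s.held w = some m := by simpa using h1
      have hnm : m ∉ unmatched s := fun hc => mem_unmatched.mp hc w hw
      have hnext : (step P s).next m = s.next m := by rw [step_next, if_neg hnm]
      obtain ⟨hpos, hle, hrank, hrej⟩ := hH w m hw
      rw [hnext]
      exact ⟨hpos, hle, hrank, fun i hi hlt' => hRejMono m i hi (hrej i hi hlt')⟩
  exact ⟨hinj', hU', hH'⟩

lemma inv_init (P : Profile n) (hn : 0 < n) : Inv P (initState n) := by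
  refine ⟨?_, ?_, ?_⟩
  · intro w w' m h; simp [initState] at h
  · intro m _
    refine ⟨hn, fun i hi h => absurd h ?_⟩
    simp [initState]
  · intro w m h; simp [initState] at h

lemma stateAt_succ (P : Profile n) (k : ℕ) :
    stateAt P (k + 1) = step P (stateAt P k) := by
  simp [stateAt, Function.iterate_succ_apply']

lemma inv_stateAt (P : Profile n) (hn : 0 < n) (k : ℕ) : Inv P (stateAt P k) := by
  induction k with
  | zero => exact inv_init P hn
  | succ k ih => rw [stateAt_succ]; exact inv_step ih

lemma step_fixed {P : Profile n} {s : DAState n} (h : unmatched s = ∅) : step P s = s := by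
  have hprop : ∀ w, proposers P s w = ∅ := fun w => by
    rw [proposers, h, Finset.filter_empty]
  have hnext : (step P s).next = s.next := by
    funext m
    rw [step_next, if_neg (by rw [h]; exact Finset.notMem_empty m)]
  have hheld : (step P s).held = s.held := by
    funext w
    show ((proposers P s w ∪ (s.held w).toFinset).toList).argmin (P.wrank w) = s.held w
    rw [hprop w, Finset.empty_union]
    cases hw : s.held w with
    | none => simp
    | some m => simp [Finset.toList_singleton]
  cases s with
  | mk nx hd =>
    have h1 : step P ⟨nx, hd⟩ = ⟨(step P ⟨nx, hd⟩).next, (step P ⟨nx, hd⟩).held⟩ := rfl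
    rw [h1, hnext, hheld]

lemma sum_next_lt {P : Profile n} {s : DAState n} (h : (unmatched s).Nonempty) :
    ∑ m, s.next m < ∑ m, (step P s).next m := by
  obtain ⟨m, hm⟩ := h
  apply Finset.sum_lt_sum
  · intro i _
    rw [step_next]; split <;> omega
  · exact ⟨m, Finset.mem_univ m, by rw [step_next, if_pos hm]; omega⟩

lemma sum_next_le {P : Profile n} {s : DAState n} (hInv : Inv P s) :
    ∑ m, s.next m ≤ n * n := by
  have hb : ∀ m : Fin n, s.next m ≤ n := by
    intro m
    by_cases hm : m ∈ unmatched s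
    · exact le_of_lt (hInv.2.1 m hm).1
    · obtain ⟨w, hw⟩ : ∃ w, s.held w = some m := by
        by_contra h; push_neg at h; exact hm (mem_unmatched.mpr h)
      exact (hInv.2.2 w m hw).2.1
  calc ∑ m, s.next m ≤ ∑ _m : Fin n, n := Finset.sum_le_sum fun m _ => hb m
    _ = n * n := by simp [Finset.sum_const, Finset.card_univ, mul_comm]

lemma exists_empty_state (P : Profile n) (hn : 0 < n) :
    ∃ k ≤ n * n, unmatched (stateAt P k) = ∅ := by
  by_contra h
  push_neg at h
  have hne : ∀ k ≤ n * n, (unmatched (stateAt P k)).Nonempty := fun k hk =>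
    h k hk
  have hgrow : ∀ k, k ≤ n * n + 1 → k ≤ ∑ m, (stateAt P k).next m := by
    intro k
    induction k with
    | zero => intro _; exact Nat.zero_le _
    | succ k ih =>
      intro hk
      have h1 := ih (by omega)
      have h2 := sum_next_lt (s := stateAt P k) (P := P) (hne k (by omega))
      rw [← stateAt_succ] at h2
      omega
  have h1 := hgrow (n * n + 1) le_rfl
  have h2 := sum_next_le (inv_stateAt P hn (n * n + 1))
  omega

lemma stateAt_stable {P : Profile n} {K : ℕ} (h : unmatched (stateAt P K) = ∅) :
    ∀ j, stateAt P (K + j) = stateAt P K := by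
  intro j
  induction j with
  | zero => rfl
  | succ j ih =>
    rw [show K + (j + 1) = (K + j) + 1 by omega, stateAt_succ, ih, step_fixed h]

end Profile

/-- In any execution of the men-proposing DA on a profile with `n` men and `n`
women, some woman receives exactly one proposal in total. -/
theorem da_exists_woman_single_proposal (n : ℕ) (hn : 0 < n) (P : Profile n) :
    ∃ w : Fin n, P.proposalsTo w = 1 := by
  classical
  obtain ⟨K0, hK0le, hK0⟩ := Profile.exists_empty_state P hn
  have hex : ∃ k, Profile.unmatched (Profile.stateAt P k) = ∅ := ⟨K0, hK0⟩
  set K := Nat.find hex with hKdef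
  have hKempty : Profile.unmatched (Profile.stateAt P K) = ∅ := Nat.find_spec hex
  have hKle : K ≤ n * n := le_trans (Nat.find_min' hex hK0) hK0le
  have hKpos : 0 < K := by
    rcases Nat.eq_zero_or_pos K with h0 | h0
    · exfalso
      have h1 : Profile.unmatched (Profile.stateAt P 0) = ∅ := h0 ▸ hKempty
      have h2 : (⟨0, hn⟩ : Fin n) ∈ Profile.unmatched (Profile.stateAt P 0) := by
        rw [Profile.mem_unmatched]
        intro w'
        simp [Profile.stateAt, Profile.initState]
      rw [h1] at h2
      exact Finset.notMem_empty _ h2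
    · exact h0
  set r := K - 1 with hrdef
  have hKr : K = r + 1 := by omega
  have hrne : Profile.unmatched (Profile.stateAt P r) ≠ ∅ := Nat.find_min hex (by omega)
  obtain ⟨m, hm⟩ := Finset.nonempty_iff_ne_empty.mpr hrne
  set s := Profile.stateAt P r with hsdef
  set w := Profile.target P s m with hwdef
  have hstep : Profile.stateAt P K = Profile.step P s := by
    rw [hKr]; exact Profile.stateAt_succ P r
  have hinv : Profile.Inv P s := Profile.inv_stateAt P hn r
  have hmatched' : ∀ y : Fin n, ∃ w', (Profile.step P s).held w' = some y := by
    intro y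
    by_contra hc
    push_neg at hc
    have hy : y ∈ Profile.unmatched (Profile.step P s) := Profile.mem_unmatched.mpr hc
    rw [← hstep, hKempty] at hy
    exact Finset.notMem_empty _ hy
  have hmU : m ∈ Profile.proposers P s w := Profile.mem_proposers.mpr ⟨hm, rfl⟩
  obtain ⟨x, hx⟩ := Profile.held_step_isSome ⟨m, Finset.mem_union_left _ hmU⟩
  have huniq : ∀ y ∈ Profile.proposers P s w ∪ (s.held w).toFinset, y = x := by
    intro y hy
    obtain ⟨w', hw'⟩ := hmatched' y
    have h1 := Profile.held_step_mem hw'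
    rw [Finset.mem_union] at h1 hy
    have hww' : w' = w := by
      rcases h1 with h1 | h1 <;> rcases hy with hy | hy
      · rw [Profile.mem_proposers] at h1 hy; rw [← h1.2, ← hy.2]
      · exact absurd (by simpa using hy)
          (Profile.mem_unmatched.mp (Profile.mem_proposers.mp h1).1 w)
      · exact absurd (by simpa using h1)
          (Profile.mem_unmatched.mp (Profile.mem_proposers.mp hy).1 w')
      · exact hinv.1 w' w y (by simpa using h1) (by simpa using hy)
    rw [hww'] at hw'
    exact Option.some_injective _ (hw'.symm.trans hx)
  have hxm : x = m := (huniq m (Finset.mem_union_left _ hmU)).symm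
  have hpropw : Profile.proposers P s w = {m} :=
    Finset.eq_singleton_iff_unique_mem.mpr
      ⟨hmU, fun y hy => (huniq y (Finset.mem_union_left _ hy)).trans hxm⟩
  have hheldw : s.held w = none := by
    cases hw : s.held w with
    | none => rfl
    | some y =>
      exfalso
      have hym : y = m := (huniq y (Finset.mem_union_right _ (by simp [hw]))).trans hxm
      exact Profile.mem_unmatched.mp hm w (by rw [hw, hym])
  have hbefore : ∀ k, k < r → Profile.proposers P (Profile.stateAt P k) w = ∅ := by
    intro k hk
    by_contra hne
    obtain ⟨y, hy⟩ := Finset.nonempty_iff_ne_empty.mpr hne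
    have hpersist : ∀ j, k + 1 + j ≤ r →
        ∃ z, (Profile.stateAt P (k + 1 + j)).held w = some z := by
      intro j
      induction j with
      | zero =>
        intro _
        rw [Nat.add_zero, Profile.stateAt_succ]
        exact Profile.held_step_isSome ⟨y, Finset.mem_union_left _ hy⟩
      | succ j ih =>
        intro hle
        obtain ⟨z, hz⟩ := ih (by omega)
        rw [show k + 1 + (j + 1) = (k + 1 + j) + 1 by omega, Profile.stateAt_succ]
        obtain ⟨z', hz', _⟩ := Profile.held_mono hz
        exact ⟨z', hz'⟩
    obtain ⟨z, hz⟩ := hpersist (r - (k + 1)) (by omega)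
    rw [show k + 1 + (r - (k + 1)) = r by omega, ← hsdef, hheldw] at hz
    cases hz
  have hafter : ∀ k, r < k → Profile.proposers P (Profile.stateAt P k) w = ∅ := by
    intro k hk
    have hk' : Profile.stateAt P k = Profile.stateAt P K := by
      rw [show k = K + (k - K) by omega]
      exact Profile.stateAt_stable hKempty _
    apply Finset.eq_empty_of_forall_notMem
    intro y hy
    have h1 := (Profile.mem_proposers.mp hy).1
    rw [hk', hKempty] at h1
    exact Finset.notMem_empty _ h1
  refine ⟨w, ?_⟩
  have h0 : ∀ k ∈ Finset.range (n * n + 1), k ≠ r →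
      (Profile.proposers P (Profile.stateAt P k) w).card = 0 := by
    intro k _ hkr
    rcases Nat.lt_or_ge k r with h | h
    · rw [hbefore k h, Finset.card_empty]
    · rw [hafter k (by omega), Finset.card_empty]
  simp only [Profile.proposalsTo]
  rw [Finset.sum_eq_single_of_mem r (Finset.mem_range.mpr (by omega)) h0,
    ← hsdef, hpropw, Finset.card_singleton]
end
end

section
/- For every n >= 1, there exists a preference profile with n men and n women on which the men-proposing deferred acceptance algorithm makes exactly n^2 - n + 1 proposals and runs for exactly n^2 - 2n + 2 rounds. -/
open scoped Classical

noncomputable section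

namespace DAWitness

open Profile

open scoped Fin.NatCast Fin.IntCast Fin.CommRing

variable (n : ℕ) [NeZero n]

lemma cast_pred : ((n - 1 : ℕ) : Fin n) = -1 := by
  have h1 : 1 ≤ n := Nat.one_le_iff_ne_zero.mpr (NeZero.ne n)
  have h : ((n - 1 : ℕ) : Fin n) + 1 = 0 := by
    have : ((n - 1 : ℕ) : Fin n) + ((1 : ℕ) : Fin n) = ((n : ℕ) : Fin n) := by
      rw [← Nat.cast_add]; congr 1; omega
    simpa using this
  exact eq_neg_of_add_eq_zero_left h

lemma neg_cast_val (t : ℕ) (h1 : 0 < t) (h2 : t ≤ n) : ((-(t : Fin n)) : Fin n).val = n - t := by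
  have : (-(t : Fin n)) = ((n - t : ℕ) : Fin n) := by
    have h : ((t : ℕ) : Fin n) + ((n - t : ℕ) : Fin n) = 0 := by
      rw [← Nat.cast_add]
      have : t + (n - t) = n := by omega
      rw [this]; simp
    exact neg_eq_of_add_eq_zero_left (by rw [add_comm]; exact h)
  rw [this, Fin.val_natCast, Nat.mod_eq_of_lt (by omega)]

lemma sub_one_val (c : Fin n) (hc : 0 < c.val) : (c - 1).val = c.val - 1 := by
  have : c - 1 = ((c.val - 1 : ℕ) : Fin n) := by
    have h : ((c.val - 1 : ℕ) : Fin n) + 1 = c := by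
      have : ((c.val - 1 : ℕ) : Fin n) + ((1 : ℕ) : Fin n) = ((c.val : ℕ) : Fin n) := by
        rw [← Nat.cast_add]; congr 1; omega
      simpa using this
    exact (eq_sub_of_add_eq h).symm
  rw [this, Fin.val_natCast, Nat.mod_eq_of_lt (by omega)]

/-- rotation by `r` of the first `n-1` elements of `Fin n`, fixing the last -/
def rotPerm (r : ℕ) : Fin n ≃ Fin n where
  toFun k := if (k : ℕ) = n - 1 then k else (((k : ℕ) + r % (n - 1)) % (n - 1) : ℕ)
  invFun k := if (k : ℕ) = n - 1 then k else (((k : ℕ) + ((n - 1) - r % (n - 1))) % (n - 1) : ℕ)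
  left_inv := by
    intro k
    by_cases hk : (k : ℕ) = n - 1
    · simp [hk]
    · have h2 : 2 ≤ n := by have := k.isLt; omega
      have hklt : (k : ℕ) < n - 1 := by have := k.isLt; omega
      have hm : 0 < n - 1 := by omega
      have hxlt : ((k : ℕ) + r % (n - 1)) % (n - 1) < n - 1 := Nat.mod_lt _ hm
      have hv : ((((k : ℕ) + r % (n - 1)) % (n - 1) : ℕ) : Fin n).val
          = ((k : ℕ) + r % (n - 1)) % (n - 1) := by
        rw [Fin.val_natCast, Nat.mod_eq_of_lt (by omega)]
      simp only [Equiv.coe_fn_mk, if_neg hk]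
      rw [if_neg (by rw [hv]; omega), hv, Nat.mod_add_mod]
      have hr : r % (n - 1) < n - 1 := Nat.mod_lt _ hm
      have : (k : ℕ) + r % (n - 1) + ((n - 1) - r % (n - 1)) = (k : ℕ) + (n - 1) := by omega
      rw [this, Nat.add_mod_right, Nat.mod_eq_of_lt hklt, Fin.cast_val_eq_self]
  right_inv := by
    intro k
    by_cases hk : (k : ℕ) = n - 1
    · simp [hk]
    · have h2 : 2 ≤ n := by have := k.isLt; omega
      have hklt : (k : ℕ) < n - 1 := by have := k.isLt; omega
      have hm : 0 < n - 1 := by omega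
      have hxlt : ((k : ℕ) + ((n - 1) - r % (n - 1))) % (n - 1) < n - 1 := Nat.mod_lt _ hm
      have hv : ((((k : ℕ) + ((n - 1) - r % (n - 1))) % (n - 1) : ℕ) : Fin n).val
          = ((k : ℕ) + ((n - 1) - r % (n - 1))) % (n - 1) := by
        rw [Fin.val_natCast, Nat.mod_eq_of_lt (by omega)]
      simp only [Equiv.coe_fn_mk, if_neg hk]
      rw [if_neg (by rw [hv]; omega), hv, Nat.mod_add_mod]
      have hr : r % (n - 1) < n - 1 := Nat.mod_lt _ hm
      have : (k : ℕ) + ((n - 1) - r % (n - 1)) + r % (n - 1) = (k : ℕ) + (n - 1) := by omega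
      rw [this, Nat.add_mod_right, Nat.mod_eq_of_lt hklt, Fin.cast_val_eq_self]

/-- The witness profile. -/
def WP : Profile n := ⟨fun i => rotPerm n i.val, fun w => Equiv.addLeft (w + 1)⟩

lemma WP_wrank (w m : Fin n) : (WP n).wrank w m = (m - w - 1).val := by
  simp only [WP, Profile.wrank, Equiv.addLeft_symm, Equiv.coe_addLeft]
  congr 1
  abel

lemma WP_mpref (i k : Fin n) :
    (WP n).mpref i k = if (k : ℕ) = n - 1 then k
      else (((k : ℕ) + (i : ℕ) % (n - 1)) % (n - 1) : ℕ) := rfl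


/-- number of proposals man `m` has made after `a+1` rounds -/
def cntN (a m : ℕ) : ℕ := (a + (n - 1 - m)) / n

/-- the man held by woman `w` after `a+1` rounds (for `w ≠ last`) -/
def hvF (a : ℕ) (w : Fin n) : Fin n :=
  w - ((a / (n - 1) : ℕ) : Fin n) - (if (w : ℕ) ≤ a % (n - 1) then 1 else 0)

/-- the state after `a+1` rounds, for `0 ≤ a ≤ (n-1)^2 - 1` -/
def G (a : ℕ) : Profile.DAState n :=
  ⟨fun m => 1 + cntN n a m.val,
   fun w => if (w : ℕ) = n - 1 then none else some (hvF n a w)⟩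

/-- the final state -/
def Gfin : Profile.DAState n :=
  ⟨fun m => 1 + cntN n ((n - 1) * (n - 1)) m.val,
   fun w => if (w : ℕ) = n - 1 then some ((((n - 1) * (n - 1) - 1 : ℕ)) : Fin n)
     else some (hvF n ((n - 1) * (n - 1) - 1) w)⟩

omit [NeZero n] in
lemma key_div (q x : ℕ) (hx : x < n) : (n * q + x) / n = q := by
  rw [Nat.mul_add_div (by omega), Nat.div_eq_of_lt hx, Nat.add_zero]

lemma cntN_u (a : ℕ) : cntN n a (a % n) = a / n := by
  have h1 : 1 ≤ n := Nat.one_le_iff_ne_zero.mpr (NeZero.ne n)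
  have hd := Nat.div_add_mod a n
  have hr : a % n < n := Nat.mod_lt _ (by omega)
  unfold cntN
  have e : a + (n - 1 - a % n) = n * (a / n) + (n - 1) := by omega
  rw [e, key_div n _ _ (by omega)]

lemma cntN_succ (a m : ℕ) (hm : m ≤ n - 1) :
    cntN n (a + 1) m = cntN n a m + if m = a % n then 1 else 0 := by
  have h1 : 1 ≤ n := Nat.one_le_iff_ne_zero.mpr (NeZero.ne n)
  have hd := Nat.div_add_mod a n
  have hr : a % n < n := Nat.mod_lt _ (by omega)
  have hmul : n * (a / n + 1) = n * (a / n) + n := by ring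
  unfold cntN
  by_cases h : m = a % n
  · rw [if_pos h]
    have e2 : a + (n - 1 - m) = n * (a / n) + (n - 1) := by omega
    have e1 : a + 1 + (n - 1 - m) = n * (a / n + 1) + 0 := by omega
    rw [e1, e2, key_div n _ _ (by omega), key_div n _ _ (by omega)]
  · rw [if_neg h]
    by_cases hc : a % n + (n - 1 - m) < n
    · have e2 : a + (n - 1 - m) = n * (a / n) + (a % n + (n - 1 - m)) := by omega
      have e1 : a + 1 + (n - 1 - m) = n * (a / n) + (a % n + (n - 1 - m) + 1) := by omega
      rw [e1, e2, key_div n _ _ (by omega), key_div n _ _ (by omega)]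
      omega
    · have e2 : a + (n - 1 - m) = n * (a / n + 1) + (a % n + (n - 1 - m) - n) := by omega
      have e1 : a + 1 + (n - 1 - m) = n * (a / n + 1) + (a % n + (n - 1 - m) + 1 - n) := by omega
      rw [e1, e2, key_div n _ _ (by omega), key_div n _ _ (by omega)]

lemma cast_a (h2 : 2 ≤ n) (a : ℕ) :
    (a : Fin n) = ((a % (n - 1) : ℕ) : Fin n) - ((a / (n - 1) : ℕ) : Fin n) := by
  conv_lhs => rw [← Nat.div_add_mod a (n - 1)]
  push_cast
  rw [cast_pred]
  ring

lemma hv_ne (h2 : 2 ≤ n) (a : ℕ) (w : Fin n) (hw : (w : ℕ) ≠ n - 1) :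
    hvF n a w ≠ (a : Fin n) := by
  have hs : a % (n - 1) < n - 1 := Nat.mod_lt _ (by omega)
  intro h
  rw [cast_a n h2] at h
  unfold hvF at h
  by_cases hws : (w : ℕ) ≤ a % (n - 1)
  · rw [if_pos hws] at h
    have hw2 : w = ((a % (n - 1) + 1 : ℕ) : Fin n) := by
      push_cast
      linear_combination h
    have := congrArg Fin.val hw2
    rw [Fin.val_natCast, Nat.mod_eq_of_lt (by omega)] at this
    omega
  · rw [if_neg hws] at h
    have hw2 : w = ((a % (n - 1) : ℕ) : Fin n) := by linear_combination h
    have := congrArg Fin.val hw2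
    rw [Fin.val_natCast, Nat.mod_eq_of_lt (by omega)] at this
    omega

lemma hv_cover (h2 : 2 ≤ n) (a : ℕ) (m : Fin n) (hm : m ≠ (a : Fin n)) :
    ∃ w : Fin n, (w : ℕ) ≠ n - 1 ∧ hvF n a w = m := by
  have hs : a % (n - 1) < n - 1 := Nat.mod_lt _ (by omega)
  set p : Fin n := ((a / (n - 1) : ℕ) : Fin n) with hp
  set c : Fin n := m + p + 1 with hc
  by_cases hcs : (c : ℕ) ≤ a % (n - 1)
  · refine ⟨c, by omega, ?_⟩
    unfold hvF
    rw [if_pos hcs, ← hp]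
    linear_combination (hc ▸ rfl : c = m + p + 1)
  · have hc1 : (c : ℕ) ≠ a % (n - 1) + 1 := by
      intro hval
      apply hm
      rw [cast_a n h2, ← hp]
      have : c = ((a % (n - 1) + 1 : ℕ) : Fin n) := by
        rw [← hval, Fin.cast_val_eq_self]
      push_cast at this
      linear_combination this
    have hc0 : 0 < (c : ℕ) := by omega
    refine ⟨c - 1, ?_, ?_⟩
    · rw [sub_one_val n c hc0]
      have := c.isLt
      omega
    · unfold hvF
      rw [if_neg (by rw [sub_one_val n c hc0]; omega), ← hp]
      linear_combination (hc ▸ rfl : c = m + p + 1)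

lemma G_unmatched (h2 : 2 ≤ n) (a : ℕ) :
    Profile.unmatched (G n a) = {(a : Fin n)} := by
  ext m
  unfold Profile.unmatched
  rw [Finset.mem_filter]
  simp only [Profile.unmatched, Finset.mem_filter, Finset.mem_univ, true_and,
    Finset.mem_singleton, G]
  constructor
  · intro h
    by_contra hm
    obtain ⟨w, hw1, hw2⟩ := hv_cover n h2 a m hm
    exact h w (by rw [if_neg hw1, hw2])
  · intro h w
    subst h
    by_cases hw : (w : ℕ) = n - 1
    · simp [hw]
    · rw [if_neg hw]
      intro hcon
      exact hv_ne n h2 a w hw (Option.some.inj hcon)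


lemma argmin_unique {s : Finset (Fin n)} {f : Fin n → ℕ} {a : Fin n} (ha : a ∈ s)
    (h : ∀ b ∈ s, b ≠ a → f a < f b) : s.toList.argmin f = some a := by
  cases hm : s.toList.argmin f with
  | none =>
    rw [List.argmin_eq_none] at hm
    have := Finset.mem_toList.mpr ha
    rw [hm] at this
    simp at this
  | some m =>
    have hmm : m ∈ s.toList.argmin f := Option.mem_def.mpr hm
    have hmem : m ∈ s := Finset.mem_toList.mp (List.argmin_mem hmm)
    have hle : f m ≤ f a := List.le_of_mem_argmin (Finset.mem_toList.mpr ha) hmm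
    by_cases hma : m = a
    · rw [hma]
    · exact absurd hle (not_le.mpr (h m hmem hma))

omit [NeZero n] in
lemma K_eq (h2 : 2 ≤ n) : (n - 1) * (n - 1) = n * (n - 2) + 1 := by
  obtain ⟨k, rfl⟩ : ∃ k, n = k + 2 := ⟨n - 2, by omega⟩
  show (k + 1) * (k + 1) = (k + 2) * k + 1
  ring

lemma cast_two' (h2 : 2 ≤ n) : ((n - 2 : ℕ) : Fin n) = -2 := by
  have h : ((n - 2 : ℕ) : Fin n) + 2 = 0 := by
    have : ((n - 2 : ℕ) : Fin n) + ((2 : ℕ) : Fin n) = ((n : ℕ) : Fin n) := by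
      rw [← Nat.cast_add]; congr 1; omega
    simpa using this
  exact eq_neg_of_add_eq_zero_left h

lemma G_next_u (a : ℕ) : (G n a).next ((a : Fin n)) = 1 + a / n := by
  show 1 + cntN n a ((a : Fin n)).val = _
  rw [Fin.val_natCast, cntN_u]

lemma target_G (h2 : 2 ≤ n) (a : ℕ) (ha : a < n * (n - 2)) :
    Profile.target (WP n) (G n a) ((a : Fin n)) = (((a + 1) % (n - 1) : ℕ) : Fin n) := by
  have hdiv : a / n < n - 2 := Nat.div_lt_of_lt_mul ha
  have hd := Nat.div_add_mod a n
  unfold Profile.target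
  simp only [G_next_u]
  rw [WP_mpref]
  have hval : (1 + a / n) % n = 1 + a / n := Nat.mod_eq_of_lt (by omega)
  simp only [Fin.val_mk, hval]
  rw [if_neg (by omega)]
  congr 1
  rw [Fin.val_natCast]
  -- goal : (1 + a / n + a % n % (n - 1)) % (n - 1) = (a + 1) % (n - 1)
  have e : (n - 1) * (a / n) + (a / n) = n * (a / n) := by
    have h : n - 1 + 1 = n := by omega
    calc (n - 1) * (a / n) + (a / n) = (n - 1 + 1) * (a / n) := by ring
    _ = n * (a / n) := by rw [h]
  have step1 : (1 + a / n + a % n % (n - 1)) % (n - 1) = (1 + a / n + a % n) % (n - 1) :=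
    Nat.ModEq.add_left _ (Nat.mod_modEq _ _)
  rw [step1, show a + 1 = (n - 1) * (a / n) + (1 + a / n + a % n) by omega,
    Nat.mul_add_mod]

lemma target_G_last (h2 : 2 ≤ n) :
    Profile.target (WP n) (G n (n * (n - 2))) ((n * (n - 2) : ℕ) : Fin n)
      = ((n - 1 : ℕ) : Fin n) := by
  have hdiv : n * (n - 2) / n = n - 2 :=
    Nat.mul_div_cancel_left (n - 2) (show 0 < n by omega)
  unfold Profile.target
  simp only [G_next_u]
  rw [WP_mpref]
  have hval : (1 + n * (n - 2) / n) % n = n - 1 := by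
    rw [hdiv, show 1 + (n - 2) = n - 1 by omega]; exact Nat.mod_eq_of_lt (by omega)
  simp only [Fin.val_mk, hval]
  rw [if_true]
  apply Fin.ext
  show n - 1 = ((n - 1 : ℕ) : Fin n).val
  rw [Fin.val_natCast, Nat.mod_eq_of_lt (by omega)]


lemma hv_star (h2 : 2 ≤ n) (a : ℕ) (ha : a + 1 < (n - 1) * (n - 1)) :
    hvF n a (((a + 1) % (n - 1) : ℕ) : Fin n) = (a : Fin n) + 1 ∧
    ((a : Fin n) - (((a + 1) % (n - 1) : ℕ) : Fin n)) ≠ 0 := by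
  have hm1 : 0 < n - 1 := by omega
  have hd := Nat.div_add_mod a (n - 1)
  have hs : a % (n - 1) < n - 1 := Nat.mod_lt _ hm1
  have hp : a / (n - 1) < n - 1 := Nat.div_lt_of_lt_mul (by omega)
  by_cases hcase : a % (n - 1) = n - 2
  · have hmul : (n - 1) * (a / (n - 1) + 1) = (n - 1) * (a / (n - 1)) + (n - 1) := by ring
    have ha1 : a + 1 = (n - 1) * (a / (n - 1) + 1) := by omega
    have hs' : (a + 1) % (n - 1) = 0 := by rw [ha1]; exact Nat.mul_mod_right _ _
    have hplt : a / (n - 1) + 1 < n - 1 := by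
      by_contra hcon
      push_neg at hcon
      have he : a / (n - 1) + 1 = n - 1 := by omega
      rw [he] at ha1; omega
    have hb2 : a / (n - 1) + 2 ≤ n := by omega
    have hw0 : ((((a + 1) % (n - 1) : ℕ)) : Fin n) = 0 := by rw [hs']; simp
    have hcasta : (a : Fin n) = ((n - 2 : ℕ) : Fin n) - ((a / (n - 1) : ℕ) : Fin n) := by
      rw [cast_a n h2 a, hcase]
    constructor
    · rw [hw0]
      unfold hvF
      rw [if_pos (by simp)]
      rw [hcasta, cast_two' n h2]
      ring
    · rw [hw0, hcasta, cast_two' n h2, sub_zero]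
      have hval := neg_cast_val n (a / (n - 1) + 2) (Nat.succ_pos _) hb2
      have hvne : n - (a / (n - 1) + 2) ≠ 0 := by omega
      intro hcon
      have hneg : -((a / (n - 1) + 2 : ℕ) : Fin n) = 0 := by
        push_cast
        linear_combination hcon
      rw [hneg] at hval
      rw [Fin.val_zero] at hval
      exact hvne hval.symm
  · have hslt : a % (n - 1) + 1 < n - 1 := by omega
    have hs' : (a + 1) % (n - 1) = a % (n - 1) + 1 := by
      have he : a + 1 = (n - 1) * (a / (n - 1)) + (a % (n - 1) + 1) := by omega
      rw [he, Nat.mul_add_mod, Nat.mod_eq_of_lt hslt]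
    have hwv : ((((a + 1) % (n - 1) : ℕ)) : Fin n).val = a % (n - 1) + 1 := by
      rw [hs', Fin.val_natCast, Nat.mod_eq_of_lt (by omega)]
    have hb1 : a / (n - 1) + 1 ≤ n := by omega
    have hvne1 : n - (a / (n - 1) + 1) ≠ 0 := by omega
    have hcasta := cast_a n h2 a
    constructor
    · unfold hvF
      rw [if_neg (by rw [hwv]; omega)]
      rw [hs', hcasta]
      push_cast
      ring
    · rw [hcasta, hs']
      have hval := neg_cast_val n (a / (n - 1) + 1) (Nat.succ_pos _) hb1
      intro hcon
      have hneg : -((a / (n - 1) + 1 : ℕ) : Fin n) = 0 := by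
        push_cast
        push_cast at hcon
        linear_combination hcon
      rw [hneg] at hval
      rw [Fin.val_zero] at hval
      exact hvne1 hval.symm

lemma hv_succ (h2 : 2 ≤ n) (a : ℕ) (ha : a + 1 < (n - 1) * (n - 1)) (w : Fin n)
    (hw : (w : ℕ) ≠ n - 1) (hws : (w : ℕ) ≠ (a + 1) % (n - 1)) :
    hvF n (a + 1) w = hvF n a w := by
  have hm1 : 0 < n - 1 := by omega
  have hd := Nat.div_add_mod a (n - 1)
  have hs : a % (n - 1) < n - 1 := Nat.mod_lt _ hm1
  have hwval : (w : ℕ) < n - 1 := by have := w.isLt; omega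
  by_cases hcase : a % (n - 1) = n - 2
  · have hmul : (n - 1) * (a / (n - 1) + 1) = (n - 1) * (a / (n - 1)) + (n - 1) := by ring
    have ha1 : a + 1 = (n - 1) * (a / (n - 1) + 1) := by omega
    have hs' : (a + 1) % (n - 1) = 0 := by rw [ha1]; exact Nat.mul_mod_right _ _
    have hp' : (a + 1) / (n - 1) = a / (n - 1) + 1 := by
      rw [ha1]; exact Nat.mul_div_cancel_left _ hm1
    unfold hvF
    rw [hs', hp', if_neg (by omega), if_pos (by omega)]
    push_cast
    ring
  · have hslt : a % (n - 1) + 1 < n - 1 := by omega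
    have he : a + 1 = (n - 1) * (a / (n - 1)) + (a % (n - 1) + 1) := by omega
    have hs' : (a + 1) % (n - 1) = a % (n - 1) + 1 := by
      rw [he, Nat.mul_add_mod, Nat.mod_eq_of_lt hslt]
    have hp' : (a + 1) / (n - 1) = a / (n - 1) := by
      rw [he]; exact key_div (n - 1) _ _ hslt
    rw [hs'] at hws
    unfold hvF
    rw [hs', hp']
    by_cases hcw : (w : ℕ) ≤ a % (n - 1)
    · rw [if_pos (by omega), if_pos hcw]
    · rw [if_neg (by omega), if_neg hcw]

lemma proposers_G (h2 : 2 ≤ n) (a : ℕ) (w : Fin n) :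
    Profile.proposers (WP n) (G n a) w =
      if Profile.target (WP n) (G n a) ((a : Fin n)) = w then {(a : Fin n)} else ∅ := by
  unfold Profile.proposers
  rw [G_unmatched n h2, Finset.filter_singleton]

omit [NeZero n] in
lemma DAState.ext' {s t : Profile.DAState n} (h1 : s.next = t.next) (h2 : s.held = t.held) :
    s = t := by
  cases s; cases t; cases h1; cases h2; rfl

lemma step_G (h2 : 2 ≤ n) (a : ℕ) (ha : a + 1 < (n - 1) * (n - 1)) :
    Profile.step (WP n) (G n a) = G n (a + 1) := by
  have hK := K_eq n h2
  have hm1 : 0 < n - 1 := by omega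
  have hs : a % (n - 1) < n - 1 := Nat.mod_lt _ hm1
  have haK : a < n * (n - 2) := by omega
  have htar := target_G n h2 a haK
  obtain ⟨hstar1, hstar2⟩ := hv_star n h2 a ha
  have hs'lt : (a + 1) % (n - 1) < n - 1 := Nat.mod_lt _ hm1
  have hwsval : ((((a + 1) % (n - 1) : ℕ)) : Fin n).val = (a + 1) % (n - 1) := by
    rw [Fin.val_natCast]; exact Nat.mod_eq_of_lt (by omega)
  apply DAState.ext'
  · funext m
    show (if m ∈ Profile.unmatched (G n a) then (G n a).next m + 1 else (G n a).next m)
      = 1 + cntN n (a + 1) m.val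
    rw [G_unmatched n h2]
    have hmval : m.val ≤ n - 1 := by have := m.isLt; omega
    by_cases hm : m = (a : Fin n)
    · rw [if_pos (Finset.mem_singleton.mpr hm), hm]
      show (1 + cntN n a ((a : Fin n)).val) + 1 = 1 + cntN n (a + 1) ((a : Fin n)).val
      rw [Fin.val_natCast,
        cntN_succ n a (a % n) (by have := Nat.mod_lt a (show 0 < n by omega); omega),
        if_pos rfl]
      omega
    · rw [if_neg (fun hc => hm (Finset.mem_singleton.mp hc))]
      show 1 + cntN n a m.val = 1 + cntN n (a + 1) m.val
      rw [cntN_succ n a m.val hmval, if_neg, Nat.add_zero]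
      intro hcon
      exact hm (Fin.ext (by rw [Fin.val_natCast]; exact hcon))
  · funext w
    show ((Profile.proposers (WP n) (G n a) w ∪ ((G n a).held w).toFinset).toList).argmin
        ((WP n).wrank w) = (G n (a + 1)).held w
    rw [proposers_G n h2 a w, htar]
    by_cases hwlast : (w : ℕ) = n - 1
    · rw [if_neg (by intro hcon; rw [← hcon] at hwlast; omega)]
      have hheld : (G n a).held w = none := by
        show (if (w : ℕ) = n - 1 then none else some (hvF n a w)) = none
        rw [if_pos hwlast]
      have hheld' : (G n (a + 1)).held w = none := by
        show (if (w : ℕ) = n - 1 then none else some (hvF n (a + 1) w)) = none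
        rw [if_pos hwlast]
      rw [hheld, hheld']
      simp
    · by_cases hwstar : w = (((a + 1) % (n - 1) : ℕ) : Fin n)
      · subst hwstar
        rw [if_pos rfl]
        have hheld : (G n a).held (((a + 1) % (n - 1) : ℕ) : Fin n)
            = some ((a : Fin n) + 1) := by
          show (if ((((a + 1) % (n - 1) : ℕ) : Fin n) : ℕ) = n - 1 then none else _) = _
          rw [if_neg hwlast, hstar1]
        rw [hheld, Option.toFinset_some,
          show ({(a : Fin n)} ∪ {(a : Fin n) + 1} : Finset (Fin n))
            = insert ((a : Fin n)) {(a : Fin n) + 1} from rfl]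
        have hy : ((a : Fin n) - (((a + 1) % (n - 1) : ℕ) : Fin n)).val ≠ 0 :=
          fun hc => hstar2 (Fin.ext (by rw [hc, Fin.val_zero]))
        rw [argmin_unique n (Finset.mem_insert_self _ _) ?minproof]
        case minproof =>
          intro b hb hbne
          rcases Finset.mem_insert.mp hb with hb1 | hb1
          · exact absurd hb1 hbne
          · rw [Finset.mem_singleton.mp hb1, WP_wrank, WP_wrank]
            have he1 : (a : Fin n) + 1 - (((a + 1) % (n - 1) : ℕ) : Fin n) - 1
                = (a : Fin n) - (((a + 1) % (n - 1) : ℕ) : Fin n) := by ring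
            have he2 : (a : Fin n) - (((a + 1) % (n - 1) : ℕ) : Fin n) - 1
                = ((a : Fin n) - (((a + 1) % (n - 1) : ℕ) : Fin n)) - 1 := by ring
            rw [he1, he2, sub_one_val n _ (Nat.pos_of_ne_zero hy)]
            omega
        · -- RHS : G (a+1) held wstar = some ↑a
          have hheld' : (G n (a + 1)).held (((a + 1) % (n - 1) : ℕ) : Fin n)
              = some (hvF n (a + 1) (((a + 1) % (n - 1) : ℕ) : Fin n)) := by
            show (if ((((a + 1) % (n - 1) : ℕ) : Fin n) : ℕ) = n - 1 then none else _) = _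
            rw [if_neg hwlast]
          rw [hheld']
          congr 1
          unfold hvF
          rw [if_pos (by rw [hwsval])]
          have hca := cast_a n h2 (a + 1)
          push_cast at hca
          linear_combination hca
      · rw [if_neg (fun hcon => hwstar hcon.symm)]
        have hheld : (G n a).held w = some (hvF n a w) := by
          show (if (w : ℕ) = n - 1 then none else some (hvF n a w)) = _
          rw [if_neg hwlast]
        have hheld' : (G n (a + 1)).held w = some (hvF n (a + 1) w) := by
          show (if (w : ℕ) = n - 1 then none else some (hvF n (a + 1) w)) = _
          rw [if_neg hwlast]
        rw [hheld, hheld', Finset.empty_union, Option.toFinset_some,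
          Finset.toList_singleton, List.argmin_singleton]
        congr 1
        have hwne : (w : ℕ) ≠ (a + 1) % (n - 1) := by
          intro hcon
          exact hwstar (Fin.ext (by rw [hwsval]; exact hcon))
        exact (hv_succ n h2 a ha w hwlast hwne).symm


lemma state_one (h2 : 2 ≤ n) : Profile.stateAt (WP n) 1 = G n 0 := by
  have hinit : Profile.unmatched (Profile.initState n) = Finset.univ := by
    ext m; simp [Profile.unmatched, Profile.initState]
  have htargets : ∀ m : Fin n, Profile.target (WP n) (Profile.initState n) m
      = ((m.val % (n - 1) : ℕ) : Fin n) := by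
    intro m
    unfold Profile.target Profile.initState
    rw [WP_mpref]
    simp only [Fin.val_mk, Nat.zero_mod]
    simp only [show ¬ (0 = n - 1) by omega, ↓reduceIte]
    congr 1
    rw [Nat.zero_add, Nat.mod_eq_of_lt (Nat.mod_lt _ (by omega))]
  have hmemiff : ∀ (m : Fin n) (w : Fin n), (((m.val % (n - 1) : ℕ) : Fin n) = w)
      ↔ m.val % (n - 1) = (w : ℕ) := by
    intro m w
    have hlt : m.val % (n - 1) < n := lt_of_lt_of_le (Nat.mod_lt _ (by omega)) (by omega)
    constructor
    · intro h
      have := congrArg Fin.val h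
      rwa [Fin.val_natCast, Nat.mod_eq_of_lt hlt] at this
    · intro h
      apply Fin.ext
      rw [Fin.val_natCast, Nat.mod_eq_of_lt hlt]
      exact h
  have hmod : ∀ v : ℕ, v < n → v % (n - 1) = if v = n - 1 then 0 else v := by
    intro v hv
    by_cases h : v = n - 1
    · rw [if_pos h, h, Nat.mod_self]
    · rw [if_neg h]; exact Nat.mod_eq_of_lt (by omega)
  have hprop : ∀ w : Fin n, Profile.proposers (WP n) (Profile.initState n) w
      = Finset.univ.filter (fun m => m.val % (n - 1) = (w : ℕ)) := by
    intro w
    unfold Profile.proposers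
    rw [hinit]
    apply Finset.filter_congr
    intro m _
    rw [htargets m]
    exact hmemiff m w
  have hstep : Profile.stateAt (WP n) 1 = Profile.step (WP n) (Profile.initState n) := rfl
  rw [hstep]
  apply DAState.ext'
  · funext m
    show (if m ∈ Profile.unmatched (Profile.initState n) then 0 + 1 else 0)
      = 1 + cntN n 0 m.val
    rw [hinit, if_pos (Finset.mem_univ m)]
    unfold cntN
    rw [Nat.zero_add, Nat.div_eq_of_lt (by have := m.isLt; omega)]
  · funext w
    show ((Profile.proposers (WP n) (Profile.initState n) w
        ∪ (none : Option (Fin n)).toFinset).toList).argmin ((WP n).wrank w)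
      = (G n 0).held w
    rw [hprop w, Option.toFinset_none, Finset.union_empty]
    by_cases hwlast : (w : ℕ) = n - 1
    · have hempty : (Finset.univ.filter (fun m : Fin n => m.val % (n - 1) = (w : ℕ))) = ∅ := by
        apply Finset.filter_eq_empty_iff.mpr
        intro m _
        have := Nat.mod_lt m.val (show 0 < n - 1 by omega)
        omega
      have hG : (G n 0).held w = none := by
        show (if (w : ℕ) = n - 1 then none else some (hvF n 0 w)) = none
        rw [if_pos hwlast]
      rw [hempty, hG, Finset.toList_empty, List.argmin_nil]
    · by_cases hw0 : (w : ℕ) = 0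
      · have hw0' : w = 0 := Fin.ext (by rw [hw0, Fin.val_zero])
        have hset : (Finset.univ.filter (fun m : Fin n => m.val % (n - 1) = (w : ℕ)))
            = insert (0 : Fin n) {((n - 1 : ℕ) : Fin n)} := by
          ext m
          simp only [Finset.mem_filter, Finset.mem_univ, true_and, Finset.mem_insert,
            Finset.mem_singleton]
          rw [hmod m.val m.isLt, hw0]
          constructor
          · intro h
            by_cases hm : m.val = n - 1
            · right
              apply Fin.ext
              rw [Fin.val_natCast, Nat.mod_eq_of_lt (by omega), hm]
            · left
              apply Fin.ext
              rw [if_neg hm] at h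
              rw [Fin.val_zero, h]
          · rintro (h | h)
            · rw [h]
              simp only [Fin.val_zero]
              simp only [show ¬ (0 = n - 1) by omega, ↓reduceIte]
            · rw [h, Fin.val_natCast, Nat.mod_eq_of_lt (by omega), if_pos rfl]
        rw [hset]
        have hne1 : ((n - 1 : ℕ) : Fin n) = -1 := cast_pred n
        have hval2 := neg_cast_val n 2 (by omega) (by omega)
        have hval1 := neg_cast_val n 1 (by omega) (by omega)
        rw [argmin_unique n (s := insert (0 : Fin n) {((n - 1 : ℕ) : Fin n)})
          (a := ((n - 1 : ℕ) : Fin n))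
          (Finset.mem_insert_of_mem (Finset.mem_singleton_self _)) ?min1]
        case min1 =>
          intro b hb hbne
          rcases Finset.mem_insert.mp hb with hb1 | hb1
          · subst hb1
            rw [WP_wrank, WP_wrank, hw0', hne1]
            have e1 : (-1 : Fin n) - 0 - 1 = -((2 : ℕ) : Fin n) := by push_cast; ring
            have e2 : (0 : Fin n) - 0 - 1 = -((1 : ℕ) : Fin n) := by push_cast; ring
            rw [e1, e2, hval2, hval1]
            omega
          · exact absurd (Finset.mem_singleton.mp hb1) hbne
        · have hG : (G n 0).held w = some (hvF n 0 w) := by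
            show (if (w : ℕ) = n - 1 then none else some (hvF n 0 w)) = _
            rw [if_neg hwlast]
          rw [hG]
          congr 1
          unfold hvF
          rw [if_pos (by simp [hw0])]
          rw [hw0', hne1]
          simp
      · have hset : (Finset.univ.filter (fun m : Fin n => m.val % (n - 1) = (w : ℕ))) = {w} := by
          ext m
          simp only [Finset.mem_filter, Finset.mem_univ, true_and, Finset.mem_singleton]
          rw [hmod m.val m.isLt]
          constructor
          · intro h
            by_cases hm : m.val = n - 1
            · rw [if_pos hm] at h; omega
            · rw [if_neg hm] at h; exact Fin.ext h
          · intro h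
            subst h
            rw [if_neg hwlast]
        rw [hset, Finset.toList_singleton, List.argmin_singleton]
        have hG : (G n 0).held w = some (hvF n 0 w) := by
          show (if (w : ℕ) = n - 1 then none else some (hvF n 0 w)) = _
          rw [if_neg hwlast]
        rw [hG]
        congr 1
        unfold hvF
        rw [if_neg (show ¬ ((w : ℕ) ≤ 0 % (n - 1)) by rw [Nat.zero_mod]; omega)]
        simp

lemma step_G_last (h2 : 2 ≤ n) : Profile.step (WP n) (G n (n * (n - 2))) = Gfin n := by
  have hK := K_eq n h2
  have haK1 : (n - 1) * (n - 1) - 1 = n * (n - 2) := by omega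
  have hamod : n * (n - 2) % n = 0 := Nat.mul_mod_right n _
  have htar := target_G_last n h2
  apply DAState.ext'
  · funext m
    show (if m ∈ Profile.unmatched (G n (n * (n - 2))) then (G n (n * (n - 2))).next m + 1
        else (G n (n * (n - 2))).next m) = 1 + cntN n ((n - 1) * (n - 1)) m.val
    rw [G_unmatched n h2, show (n - 1) * (n - 1) = n * (n - 2) + 1 from hK]
    by_cases hm : m = ((n * (n - 2) : ℕ) : Fin n)
    · rw [if_pos (Finset.mem_singleton.mpr hm), hm]
      show (1 + cntN n (n * (n - 2)) (((n * (n - 2) : ℕ) : Fin n)).val) + 1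
        = 1 + cntN n (n * (n - 2) + 1) (((n * (n - 2) : ℕ) : Fin n)).val
      rw [Fin.val_natCast, hamod, cntN_succ n (n * (n - 2)) 0 (by omega), if_pos hamod.symm]
      omega
    · rw [if_neg (fun hc => hm (Finset.mem_singleton.mp hc))]
      show 1 + cntN n (n * (n - 2)) m.val = 1 + cntN n (n * (n - 2) + 1) m.val
      rw [cntN_succ n (n * (n - 2)) m.val (by have := m.isLt; omega), if_neg, Nat.add_zero]
      intro hcon
      exact hm (Fin.ext (by rw [Fin.val_natCast, hamod, hcon, hamod]))
  · funext w
    show ((Profile.proposers (WP n) (G n (n * (n - 2))) w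
        ∪ ((G n (n * (n - 2))).held w).toFinset).toList).argmin ((WP n).wrank w)
      = (Gfin n).held w
    rw [proposers_G n h2, htar]
    by_cases hwlast : (w : ℕ) = n - 1
    · have hw' : ((n - 1 : ℕ) : Fin n) = w := by
        apply Fin.ext
        rw [Fin.val_natCast, Nat.mod_eq_of_lt (by omega), hwlast]
      rw [if_pos hw']
      have hheld : (G n (n * (n - 2))).held w = none := by
        show (if (w : ℕ) = n - 1 then none else some (hvF n (n * (n - 2)) w)) = none
        rw [if_pos hwlast]
      have hfin : (Gfin n).held w = some (((n - 1) * (n - 1) - 1 : ℕ) : Fin n) := by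
        show (if (w : ℕ) = n - 1 then some ((((n - 1) * (n - 1) - 1 : ℕ)) : Fin n) else _) = _
        rw [if_pos hwlast]
      rw [hheld, hfin, Option.toFinset_none, Finset.union_empty, Finset.toList_singleton,
        List.argmin_singleton, haK1]
    · rw [if_neg (by
        intro hcon
        have := congrArg Fin.val hcon
        rw [Fin.val_natCast, Nat.mod_eq_of_lt (by omega)] at this
        exact hwlast this.symm)]
      have hheld : (G n (n * (n - 2))).held w = some (hvF n (n * (n - 2)) w) := by
        show (if (w : ℕ) = n - 1 then none else some (hvF n (n * (n - 2)) w)) = _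
        rw [if_neg hwlast]
      have hfin : (Gfin n).held w = some (hvF n ((n - 1) * (n - 1) - 1) w) := by
        show (if (w : ℕ) = n - 1 then _ else some (hvF n ((n - 1) * (n - 1) - 1) w)) = _
        rw [if_neg hwlast]
      rw [hheld, hfin, Finset.empty_union, Option.toFinset_some, Finset.toList_singleton,
        List.argmin_singleton, haK1]

lemma Gfin_unmatched : Profile.unmatched (Gfin n) = ∅ := by
  ext m
  simp only [Profile.unmatched, Finset.mem_filter, Finset.mem_univ, true_and,
    Finset.notMem_empty, iff_false, not_forall, not_not, Finset.mem_filter_univ]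
  by_cases h2 : 2 ≤ n
  · by_cases hm : m = (((n - 1) * (n - 1) - 1 : ℕ) : Fin n)
    · refine ⟨⟨n - 1, by omega⟩, ?_⟩
      show (if ((⟨n - 1, by omega⟩ : Fin n) : ℕ) = n - 1 then
        some ((((n - 1) * (n - 1) - 1 : ℕ)) : Fin n) else _) = some m
      rw [if_pos rfl, hm]
    · obtain ⟨w, hw1, hw2⟩ := hv_cover n h2 ((n - 1) * (n - 1) - 1) m hm
      refine ⟨w, ?_⟩
      show (if (w : ℕ) = n - 1 then _ else some (hvF n ((n - 1) * (n - 1) - 1) w)) = some m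
      rw [if_neg hw1, hw2]
  · have h1 : 1 ≤ n := Nat.one_le_iff_ne_zero.mpr (NeZero.ne n)
    have hn1 : n = 1 := by omega
    subst hn1
    refine ⟨0, ?_⟩
    show (if ((0 : Fin 1) : ℕ) = 1 - 1 then some ((((1 - 1) * (1 - 1) - 1 : ℕ)) : Fin 1)
      else some (hvF 1 ((1 - 1) * (1 - 1) - 1) (0 : Fin 1))) = some m
    rw [if_pos (show ((0 : Fin 1) : ℕ) = 1 - 1 from rfl)]
    congr 1
    exact Subsingleton.elim _ _

lemma step_Gfin : Profile.step (WP n) (Gfin n) = Gfin n := by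
  apply DAState.ext'
  · funext m
    show (if m ∈ Profile.unmatched (Gfin n) then (Gfin n).next m + 1 else (Gfin n).next m)
      = (Gfin n).next m
    rw [Gfin_unmatched, if_neg (Finset.notMem_empty m)]
  · funext w
    show ((Profile.proposers (WP n) (Gfin n) w
        ∪ ((Gfin n).held w).toFinset).toList).argmin ((WP n).wrank w) = (Gfin n).held w
    have hprop : Profile.proposers (WP n) (Gfin n) w = ∅ := by
      unfold Profile.proposers
      rw [Gfin_unmatched, Finset.filter_empty]
    rw [hprop, Finset.empty_union]
    by_cases hwlast : (w : ℕ) = n - 1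
    · have hfin : (Gfin n).held w = some (((n - 1) * (n - 1) - 1 : ℕ) : Fin n) := by
        show (if (w : ℕ) = n - 1 then some ((((n - 1) * (n - 1) - 1 : ℕ)) : Fin n) else _) = _
        rw [if_pos hwlast]
      rw [hfin, Option.toFinset_some, Finset.toList_singleton, List.argmin_singleton]
    · have hfin : (Gfin n).held w = some (hvF n ((n - 1) * (n - 1) - 1) w) := by
        show (if (w : ℕ) = n - 1 then _ else some (hvF n ((n - 1) * (n - 1) - 1) w)) = _
        rw [if_neg hwlast]
      rw [hfin, Option.toFinset_some, Finset.toList_singleton, List.argmin_singleton]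

omit [NeZero n] in
lemma stateAt_succ (P : Profile n) (k : ℕ) :
    Profile.stateAt P (k + 1) = Profile.step P (Profile.stateAt P k) :=
  Function.iterate_succ_apply' _ _ _

lemma state_one_1 : Profile.stateAt (WP 1) 1 = Gfin 1 := by
  have hstep : Profile.stateAt (WP 1) 1 = Profile.step (WP 1) (Profile.initState 1) := rfl
  rw [hstep]
  apply DAState.ext'
  · funext m
    show (if m ∈ Profile.unmatched (Profile.initState 1) then 0 + 1 else 0)
      = 1 + cntN 1 ((1 - 1) * (1 - 1)) m.val
    have hmem : m ∈ Profile.unmatched (Profile.initState 1) :=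
      Finset.mem_filter.mpr ⟨Finset.mem_univ m, fun w => by simp [Profile.initState]⟩
    rw [if_pos hmem]
    have h0 : m.val = 0 := by have := m.isLt; omega
    rw [h0]
    rfl
  · funext w
    have hw : w = 0 := Subsingleton.elim _ _
    subst hw
    show ((Profile.proposers (WP 1) (Profile.initState 1) 0
        ∪ (none : Option (Fin 1)).toFinset).toList).argmin ((WP 1).wrank 0)
      = (Gfin 1).held 0
    have hprop : Profile.proposers (WP 1) (Profile.initState 1) 0 = {0} := by
      ext m
      unfold Profile.proposers Profile.unmatched
      rw [Finset.mem_filter, Finset.mem_filter]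
      simp only [Profile.proposers, Profile.unmatched, Profile.initState, Finset.mem_filter,
        Finset.mem_univ, true_and, Finset.mem_singleton]
      constructor
      · intro _; exact Subsingleton.elim _ _
      · intro _
        refine ⟨fun w => by simp, Subsingleton.elim _ _⟩
    have hG : (Gfin 1).held 0 = some 0 := by
      show (if ((0 : Fin 1) : ℕ) = 1 - 1 then some ((((1 - 1) * (1 - 1) - 1 : ℕ)) : Fin 1)
        else some (hvF 1 ((1 - 1) * (1 - 1) - 1) (0 : Fin 1))) = some (0 : Fin 1)
      rw [if_pos (show ((0 : Fin 1) : ℕ) = 1 - 1 from rfl)]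
      exact congrArg some (Subsingleton.elim _ _)
    rw [hprop, hG, Option.toFinset_none, Finset.union_empty, Finset.toList_singleton,
      List.argmin_singleton]

lemma stateAt_G (h2 : 2 ≤ n) (k : ℕ) (hk1 : 1 ≤ k) (hk2 : k ≤ (n - 1) * (n - 1)) :
    Profile.stateAt (WP n) k = G n (k - 1) := by
  induction k with
  | zero => omega
  | succ k ih =>
    by_cases hk0 : k = 0
    · subst hk0
      exact state_one n h2
    · rw [stateAt_succ, ih (by omega) (by omega)]
      have hstep := step_G n h2 (k - 1) (by omega)
      rw [hstep]
      congr 1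
      omega

lemma stateAt_final (k : ℕ) (hk : (n - 1) * (n - 1) + 1 ≤ k) :
    Profile.stateAt (WP n) k = Gfin n := by
  induction k with
  | zero => omega
  | succ k ih =>
    by_cases hk2 : (n - 1) * (n - 1) + 1 ≤ k
    · rw [stateAt_succ, ih hk2, step_Gfin]
    · have hkK : k = (n - 1) * (n - 1) := by omega
      subst hkK
      by_cases h2 : 2 ≤ n
      · have hK := K_eq n h2
        rw [stateAt_succ, stateAt_G n h2 _ (by omega) (le_refl _)]
        have h1 : (n - 1) * (n - 1) - 1 = n * (n - 2) := by omega
        rw [h1, step_G_last n h2]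
      · have h1 : 1 ≤ n := Nat.one_le_iff_ne_zero.mpr (NeZero.ne n)
        have hn1 : n = 1 := by omega
        subst hn1
        exact state_one_1

end DAWitness

/-- For every `n ≥ 1` there is a profile on which the men-proposing DA makes
exactly `n² - n + 1` proposals and runs for exactly `n² - 2n + 2` rounds. -/
theorem da_bounds_achievable (n : ℕ) (hn : 1 ≤ n) :
    ∃ P : Profile n, P.totalProposals = n * n + 1 - n ∧ P.rounds = n * n + 2 - 2 * n := by
  haveI : NeZero n := ⟨by omega⟩
  have hle : (n - 1) * (n - 1) + 1 ≤ n * n + 1 := by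
    have := Nat.mul_le_mul (Nat.sub_le n 1) (Nat.sub_le n 1)
    omega
  refine ⟨DAWitness.WP n, ?_, ?_⟩
  · -- total proposals
    unfold Profile.totalProposals Profile.finalState
    rw [DAWitness.stateAt_final n (n * n + 1) hle]
    show ∑ m : Fin n, (1 + DAWitness.cntN n ((n - 1) * (n - 1)) m.val) = n * n + 1 - n
    by_cases h2 : 2 ≤ n
    · have hK := DAWitness.K_eq n h2
      have hval : ∀ v : ℕ, v < n →
          DAWitness.cntN n ((n - 1) * (n - 1)) v = (n - 2) + (if v = 0 then 1 else 0) := by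
        intro v hv
        unfold DAWitness.cntN
        by_cases hv0 : v = 0
        · subst hv0
          rw [if_pos rfl,
            show (n - 1) * (n - 1) + (n - 1 - 0) = n * (n - 2) + n by omega,
            Nat.mul_add_div (by omega), Nat.div_self (by omega)]
        · rw [if_neg hv0,
            show (n - 1) * (n - 1) + (n - 1 - v) = n * (n - 2) + (n - v) by omega,
            DAWitness.key_div n (n - 2) (n - v) (by omega)]
          omega
      rw [Fin.sum_univ_eq_sum_range (fun i => 1 + DAWitness.cntN n ((n - 1) * (n - 1)) i) n]
      rw [show (∑ i ∈ Finset.range n, (1 + DAWitness.cntN n ((n - 1) * (n - 1)) i))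
          = ∑ i ∈ Finset.range n, ((n - 1) + if i = 0 then 1 else 0) from
        Finset.sum_congr rfl (fun i hi => by
          rw [hval i (Finset.mem_range.mp hi)]
          rcases eq_or_ne i 0 with h | h <;> simp [h] <;> omega)]
      rw [Finset.sum_add_distrib, Finset.sum_const, Finset.card_range, smul_eq_mul,
        Finset.sum_ite_eq' (Finset.range n) 0 (fun _ => 1),
        if_pos (Finset.mem_range.mpr (by omega))]
      have e : n * (n - 1) + n = n * n := by
        calc n * (n - 1) + n = n * (n - 1 + 1) := by ring
        _ = n * n := by rw [show n - 1 + 1 = n by omega]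
      omega
    · have hn1 : n = 1 := by omega
      subst hn1
      rw [Fin.sum_univ_one]
      rfl
  · -- rounds
    unfold Profile.rounds
    have hfilter : (Finset.range (n * n + 1)).filter
        (fun k => (Profile.unmatched (Profile.stateAt (DAWitness.WP n) k)).Nonempty)
        = Finset.range ((n - 1) * (n - 1) + 1) := by
      ext k
      simp only [Finset.mem_filter, Finset.mem_range]
      constructor
      · rintro ⟨hk1, hk2⟩
        by_contra hcon
        push_neg at hcon
        rw [DAWitness.stateAt_final n k hcon, DAWitness.Gfin_unmatched] at hk2
        exact Finset.not_nonempty_empty hk2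
      · intro hk
        refine ⟨by omega, ?_⟩
        by_cases hk0 : k = 0
        · subst hk0
          show (Profile.unmatched (Profile.stateAt (DAWitness.WP n) 0)).Nonempty
          refine ⟨0, ?_⟩
          show (0 : Fin n) ∈ Profile.unmatched (Profile.initState n)
          exact Finset.mem_filter.mpr ⟨Finset.mem_univ _, fun w => by
            simp [Profile.initState]⟩
        · have h2 : 2 ≤ n := by
            by_contra hcon
            have hn1 : n = 1 := by omega
            rw [hn1] at hk
            omega
          rw [DAWitness.stateAt_G n h2 k (by omega) (by omega),
            DAWitness.G_unmatched n h2]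
          exact ⟨_, Finset.mem_singleton_self _⟩
    rw [hfilter, Finset.card_range]
    have e : (n - 1) * (n - 1) + 2 * n = n * n + 1 := by
      obtain ⟨k, rfl⟩ : ∃ k, n = k + 1 := ⟨n - 1, by omega⟩
      show k * k + 2 * (k + 1) = (k + 1) * (k + 1) + 1
      ring
    omega
end
end
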